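/- arXiv:1703.07584 — 5 statements merged into one kernel-verified Lean document; each statement's English description precedes it below -/
import Mathlib

section
/- Define f: ℝ³ → ℝ³ by f₁(b,k,z) = β_k(κ−1+k)k − β_b(1−k)b + 1/(1+(θ_b z)^{h_b}) − b, f₂(b,k,z) = (1/ε)(β_b(1−k)b − β_k(κ−1+k)k), f₃(b,k,z) = δ_z(1−z)k − ρ_z z/(1+(θ_z k)^{h_z}). Then on the boundary of M = [0, 1+β_k κ] × [0,1] × [0,1], the vector field f points inward or is tangent: for every u ∈ ∂M, f(u)·n(u) ≥ 0, where n(u) is the inward normal at a boundary face. In particular: f₁(0,k,z) ≥ 0, f₂(b,0,z) ≥ 0, f₃(b,k,0) ≥ 0, f₁(1+β_k κ, k, z) ≤ 0, f₂(b,1,z) ≤ 0, and f₃(b,k,1) ≤ 0 whenever the remaining coordinates lie in the appropriate intervals of M. -/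
/-- On the boundary of `M = [0, 1+βk κ] × [0,1] × [0,1]` the vector field of the
nondimensionalised BR signalling system points inward or is tangent. -/
theorem stmt_1
    (κ βk βb θb ε δz ρz θz : ℝ) (hbe hze : ℕ)
    (hκ : 1 ≤ κ) (hβk : 0 < βk) (hβb : 0 < βb) (hθb : 0 < θb) (hε : 0 < ε)
    (hδz : 0 < δz) (hρz : 0 < ρz) (hθz : 0 < θz) (hhb : 0 < hbe) (hhz : 0 < hze)
    (f₁ f₂ f₃ : ℝ → ℝ → ℝ → ℝ)
    (hf₁ : ∀ b k z, f₁ b k z =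
      βk * (κ - 1 + k) * k - βb * (1 - k) * b + 1 / (1 + (θb * z) ^ hbe) - b)
    (hf₂ : ∀ b k z, f₂ b k z = (1 / ε) * (βb * (1 - k) * b - βk * (κ - 1 + k) * k))
    (hf₃ : ∀ b k z, f₃ b k z = δz * (1 - z) * k - ρz * z / (1 + (θz * k) ^ hze)) :
    (∀ k ∈ Set.Icc (0 : ℝ) 1, ∀ z ∈ Set.Icc (0 : ℝ) 1, 0 ≤ f₁ 0 k z) ∧
    (∀ b ∈ Set.Icc (0 : ℝ) (1 + βk * κ), ∀ z ∈ Set.Icc (0 : ℝ) 1, 0 ≤ f₂ b 0 z) ∧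
    (∀ b ∈ Set.Icc (0 : ℝ) (1 + βk * κ), ∀ k ∈ Set.Icc (0 : ℝ) 1, 0 ≤ f₃ b k 0) ∧
    (∀ k ∈ Set.Icc (0 : ℝ) 1, ∀ z ∈ Set.Icc (0 : ℝ) 1, f₁ (1 + βk * κ) k z ≤ 0) ∧
    (∀ b ∈ Set.Icc (0 : ℝ) (1 + βk * κ), ∀ z ∈ Set.Icc (0 : ℝ) 1, f₂ b 1 z ≤ 0) ∧
    (∀ b ∈ Set.Icc (0 : ℝ) (1 + βk * κ), ∀ k ∈ Set.Icc (0 : ℝ) 1, f₃ b k 1 ≤ 0) := by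
  have hden : ∀ (t : ℝ) (n : ℕ) (c : ℝ), 0 < c → 0 ≤ t → (0:ℝ) < 1 + (c * t) ^ n := by
    intro t n c hc ht
    positivity
  refine ⟨?_, ?_, ?_, ?_, ?_, ?_⟩
  · rintro k ⟨hk0, hk1⟩ z ⟨hz0, hz1⟩
    rw [hf₁]
    have h1 : 0 ≤ βk * (κ - 1 + k) * k := by
      apply mul_nonneg (mul_nonneg hβk.le (by linarith)) hk0
    have h2 : 0 < 1 + (θb * z) ^ hbe := hden z hbe θb hθb hz0
    have h3 : 0 ≤ 1 / (1 + (θb * z) ^ hbe) := by positivity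
    nlinarith
  · rintro b ⟨hb0, hb1⟩ z ⟨hz0, hz1⟩
    rw [hf₂]
    have : 0 ≤ βb * (1 - 0) * b - βk * (κ - 1 + 0) * 0 := by nlinarith
    positivity
  · rintro b ⟨hb0, hb1⟩ k ⟨hk0, hk1⟩
    rw [hf₃]
    have h2 : 0 < 1 + (θz * k) ^ hze := hden k hze θz hθz hk0
    have : ρz * (0:ℝ) / (1 + (θz * k) ^ hze) = 0 := by simp
    nlinarith
  · rintro k ⟨hk0, hk1⟩ z ⟨hz0, hz1⟩
    rw [hf₁]
    have h2 : 0 < 1 + (θb * z) ^ hbe := hden z hbe θb hθb hz0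
    have hx : 0 ≤ (θb * z) ^ hbe := by positivity
    have h3 : 1 / (1 + (θb * z) ^ hbe) ≤ 1 := by
      rw [div_le_one h2]; linarith
    have hκk : 0 < βk * κ := mul_pos hβk (by linarith)
    have h4 : βk * (κ - 1 + k) * k ≤ βk * κ := by
      nlinarith [mul_nonneg (mul_nonneg hβk.le (by linarith : (0:ℝ) ≤ κ - k)) (by linarith : (0:ℝ) ≤ 1 - k),
        mul_nonneg hβk.le (mul_nonneg hk0 (by linarith : (0:ℝ) ≤ 1 - k))]
    have h5 : 0 ≤ βb * (1 - k) * (1 + βk * κ) :=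
      mul_nonneg (mul_nonneg hβb.le (by linarith)) (by linarith)
    nlinarith
  · rintro b ⟨hb0, hb1⟩ z ⟨hz0, hz1⟩
    rw [hf₂]
    have : βb * (1 - 1) * b - βk * (κ - 1 + 1) * 1 ≤ 0 := by nlinarith
    have hε' : 0 < 1 / ε := by positivity
    nlinarith
  · rintro b ⟨hb0, hb1⟩ k ⟨hk0, hk1⟩
    rw [hf₃]
    have h2 : 0 < 1 + (θz * k) ^ hze := hden k hze θz hθz hk0
    have : 0 ≤ ρz * 1 / (1 + (θz * k) ^ hze) := by positivity
    nlinarith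
end

section
/- For the nondimensionalised BR signalling ODE system db/dt = β_k(κ−1+k)k − β_b(1−k)b + 1/(1+(θ_b z)^{h_b}) − b, dk/dt = (1/ε)(β_b(1−k)b − β_k(κ−1+k)k), dz/dt = δ_z(1−z)k − ρ_z z/(1+(θ_z k)^{h_z}), any solution with initial value in M = [0, 1+β_k κ] × [0,1] × [0,1] remains in M for all t ≥ 0. -/
open Set Filter

lemma posSq_hasDerivAt (x : ℝ) :
    HasDerivAt (fun y : ℝ => max y 0 ^ 2) (2 * max x 0) x := by
  rcases lt_trichotomy x 0 with hx | hx | hx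
  · have he : (fun y : ℝ => max y 0 ^ 2) =ᶠ[nhds x] fun _ => (0:ℝ) := by
      filter_upwards [Iio_mem_nhds hx] with y hy
      simp [max_eq_right (le_of_lt (mem_Iio.mp hy))]
    have := (hasDerivAt_const x (0:ℝ)).congr_of_eventuallyEq he
    simpa [max_eq_right hx.le] using this
  · subst hx
    rw [hasDerivAt_iff_isLittleO]
    rw [Asymptotics.isLittleO_iff]
    intro c hc
    filter_upwards [Metric.ball_mem_nhds (0:ℝ) hc] with y hy
    have h1 : |y| < c := by simpa [Real.dist_eq] using hy
    have h2 : max y 0 ^ 2 ≤ |y| * |y| := by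
      rcases le_or_gt y 0 with h | h
      · rw [max_eq_right h]; simpa using mul_nonneg (abs_nonneg y) (abs_nonneg y)
      · rw [max_eq_left h.le]
        nlinarith [abs_nonneg y, le_abs_self y, neg_abs_le y]
    have h3 : (0:ℝ) ≤ max y 0 ^ 2 := by positivity
    simp only [max_self, ne_eq, OfNat.ofNat_ne_zero, not_false_eq_true, zero_pow, sub_zero,
      mul_zero, smul_eq_mul, zero_mul]
    rw [Real.norm_eq_abs, abs_of_nonneg h3]
    calc max y 0 ^2 ≤ |y| * |y| := h2
      _ ≤ c * |y| := by nlinarith [abs_nonneg y]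
      _ = c * ‖y‖ := by rw [Real.norm_eq_abs]
  · have he : (fun y : ℝ => max y 0 ^ 2) =ᶠ[nhds x] fun y => y ^ 2 := by
      filter_upwards [Ioi_mem_nhds hx] with y hy
      simp [max_eq_left (le_of_lt (mem_Ioi.mp hy))]
    have h2 : HasDerivAt (fun y : ℝ => y ^ 2) (2 * x) x := by
      simpa using (hasDerivAt_pow 2 x)
    have := h2.congr_of_eventuallyEq he
    simpa [max_eq_left hx.le] using this

lemma denom_lb (θ w m : ℝ) (h : ℕ) (hθ : 0 < θ) (hmθ : θ * m ≤ 1/2) (hw : -m ≤ w)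
    (hm0 : 0 < m) (hh : 0 < h) :
    -(θ * max (-w) 0) ≤ (θ * w) ^ h ∧ θ * max (-w) 0 ≤ 1/2 := by
  have hPm : max (-w) 0 ≤ m := max_le (by linarith) hm0.le
  have hP0 : 0 ≤ max (-w) 0 := le_max_right _ _
  have h2 : θ * max (-w) 0 ≤ 1/2 :=
    le_trans (mul_le_mul_of_nonneg_left hPm hθ.le) hmθ
  refine ⟨?_, h2⟩
  rcases le_or_gt 0 w with hw0 | hw0
  · have : max (-w) 0 = 0 := max_eq_right (by linarith)
    rw [this]
    have : 0 ≤ (θ * w) ^ h := pow_nonneg (by positivity) h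
    linarith
  · have hPv : max (-w) 0 = -w := max_eq_left (by linarith)
    have habs : |θ * w| = θ * max (-w) 0 := by
      rw [hPv, abs_of_neg (by nlinarith : θ * w < 0)]; ring
    have h1 : |(θ * w) ^ h| ≤ |θ * w| := by
      rw [abs_pow]
      calc |θ * w| ^ h ≤ |θ * w| ^ 1 :=
        pow_le_pow_of_le_one (abs_nonneg _) (by rw [habs]; linarith) hh
        _ = |θ * w| := pow_one _
    calc -(θ * max (-w) 0) = -|θ * w| := by rw [habs]
      _ ≤ -|(θ * w) ^ h| := by linarith
      _ ≤ (θ * w) ^ h := neg_abs_le _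


set_option maxHeartbeats 4000000 in
lemma key_bound (κ βk βb θb ε δz ρz θz B m : ℝ) (hbe hze : ℕ)
    (hκ : 1 ≤ κ) (hβk : 0 < βk) (hβb : 0 < βb) (hθb : 0 < θb) (hε : 0 < ε)
    (hδz : 0 < δz) (hρz : 0 < ρz) (hθz : 0 < θz) (hhb : 0 < hbe) (hhz : 0 < hze)
    (hB : B = 1 + βk * κ)
    (hm0 : 0 < m) (hm1 : m ≤ 1) (hmb : θb * m ≤ 1/2) (hmz : θz * m ≤ 1/2) :
    ∃ K : ℝ, ∀ bv kv zv : ℝ, -m ≤ bv → bv ≤ B + m → -m ≤ kv → kv ≤ 1 + m →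
      -m ≤ zv → zv ≤ 1 + m →
      2 * max (-bv) 0 *
          (-(βk * (κ - 1 + kv) * kv - βb * (1 - kv) * bv
            + 1 / (1 + (θb * zv) ^ hbe) - bv))
        + 2 * max (bv - B) 0 *
          (βk * (κ - 1 + kv) * kv - βb * (1 - kv) * bv
            + 1 / (1 + (θb * zv) ^ hbe) - bv)
        + 2 * max (-kv) 0 *
          (-((1/ε) * (βb * (1 - kv) * bv - βk * (κ - 1 + kv) * kv)))
        + 2 * max (kv - 1) 0 *
          ((1/ε) * (βb * (1 - kv) * bv - βk * (κ - 1 + kv) * kv))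
        + 2 * max (-zv) 0 *
          (-(δz * (1 - zv) * kv - ρz * zv / (1 + (θz * kv) ^ hze)))
        + 2 * max (zv - 1) 0 *
          (δz * (1 - zv) * kv - ρz * zv / (1 + (θz * kv) ^ hze))
      ≤ K * (max (-bv) 0 ^ 2 + max (bv - B) 0 ^ 2 + max (-kv) 0 ^ 2
          + max (kv - 1) 0 ^ 2 + max (-zv) 0 ^ 2 + max (zv - 1) 0 ^ 2) := by
  have hB1 : 1 ≤ B := by nlinarith
  refine ⟨(βk * (κ+1) + 4*βb) + (βk + (βk*(κ+2) + βb*(B+1)) + 2*θb)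
      + ε⁻¹ * (2*βb + 2*βk) + ε⁻¹ * (2*βb) + 2*δz + 2*δz, ?_⟩
  intro bv kv zv h1 h2 h3 h4 h5 h6
  set P1 := max (-bv) 0 with hP1def
  set P2 := max (bv - B) 0 with hP2def
  set P3 := max (-kv) 0 with hP3def
  set P4 := max (kv - 1) 0 with hP4def
  set P5 := max (-zv) 0 with hP5def
  set P6 := max (zv - 1) 0 with hP6def
  have hP1 : 0 ≤ P1 := le_max_right _ _
  have hP2 : 0 ≤ P2 := le_max_right _ _
  have hP3 : 0 ≤ P3 := le_max_right _ _
  have hP4 : 0 ≤ P4 := le_max_right _ _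
  have hP5 : 0 ≤ P5 := le_max_right _ _
  have hP6 : 0 ≤ P6 := le_max_right _ _
  have hP1m : P1 ≤ m := max_le (by linarith) hm0.le
  have hP3m : P3 ≤ m := max_le (by linarith) hm0.le
  have hP4m : P4 ≤ m := max_le (by linarith) hm0.le
  have hP5m : P5 ≤ m := max_le (by linarith) hm0.le
  have hP6m : P6 ≤ m := max_le (by linarith) hm0.le
  have hW : 0 ≤ P1^2 + P2^2 + P3^2 + P4^2 + P5^2 + P6^2 := by positivity
  -- denominators
  obtain ⟨hXb, hXb2⟩ := denom_lb θb zv m hbe hθb hmb h5 hm0 hhb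
  obtain ⟨hXz, hXz2⟩ := denom_lb θz kv m hze hθz hmz h3 hm0 hhz
  rw [← hP5def] at hXb hXb2
  rw [← hP3def] at hXz hXz2
  have hD1 : (1:ℝ)/2 ≤ 1 + (θb * zv) ^ hbe := by linarith
  have hD2 : (1:ℝ)/2 ≤ 1 + (θz * kv) ^ hze := by linarith
  have hD1p : (0:ℝ) < 1 + (θb * zv) ^ hbe := by linarith
  have hD2p : (0:ℝ) < 1 + (θz * kv) ^ hze := by linarith
  have hHillpos : 0 < 1 / (1 + (θb * zv) ^ hbe) := by positivity
  have hHill : 1 / (1 + (θb * zv) ^ hbe) ≤ 1 + 2 * θb * P5 := by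
    rw [div_le_iff₀ hD1p]
    have hp5 : 0 ≤ θb * P5 := by positivity
    have e1 := mul_le_mul_of_nonneg_left hD1 (by positivity : (0:ℝ) ≤ 2 * (θb * P5))
    linarith [e1, hXb, hp5]
  
  set Db := βk * (κ - 1 + kv) * kv - βb * (1 - kv) * bv
      + 1 / (1 + (θb * zv) ^ hbe) - bv with hDbdef
  set Dk := (1/ε) * (βb * (1 - kv) * bv - βk * (κ - 1 + kv) * kv) with hDkdef
  set Dz := δz * (1 - zv) * kv - ρz * zv / (1 + (θz * kv) ^ hze) with hDzdef
  have hβkκ : 0 ≤ βk * κ := mul_nonneg hβk.le (by linarith)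
  have hB1' : 0 < B := by linarith
  have ha1 : 0 ≤ βk * (κ + 1) := mul_nonneg hβk.le (by linarith)
  have ha2 : 0 ≤ βk * (κ + 2) := mul_nonneg hβk.le (by linarith)
  have ha3 : 0 ≤ βb * (B + 1) := mul_nonneg hβb.le (by linarith)
  have hεi : 0 ≤ ε⁻¹ := inv_nonneg.mpr hε.le
  have heβ : 0 ≤ ε⁻¹ * βb := mul_nonneg hεi hβb.le
  have heκ : 0 ≤ ε⁻¹ * βk := mul_nonneg hεi hβk.le
  have hC1 : 0 ≤ βk * (κ+1) + 4*βb := by linarith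
  have hC2 : 0 ≤ βk + (βk*(κ+2) + βb*(B+1)) + 2*θb := by linarith
  have hC3 : 0 ≤ ε⁻¹ * (2*βb + 2*βk) := by positivity
  have hC4 : 0 ≤ ε⁻¹ * (2*βb) := by positivity
  have hC5 : 0 ≤ 2*δz := by linarith
  -- Term 1
  have T1 : 2 * P1 * (-Db) ≤ (βk*(κ+1) + 4*βb) * (P1^2 + P2^2 + P3^2 + P4^2 + P5^2 + P6^2) := by
    rcases le_or_gt 0 bv with hbv | hbv
    · have hz1 : P1 = 0 := by rw [hP1def]; exact max_eq_right (by linarith)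
      have hL : 2 * P1 * (-Db) = 0 := by rw [hz1]; ring
      linarith [mul_nonneg hC1 hW, hL]
    · have hv1 : P1 = -bv := by rw [hP1def]; exact max_eq_left (by linarith)
      have hkk : -((κ - 1 + kv) * kv) ≤ (κ+1) * P3 := by
        rcases le_or_gt 0 kv with hkv | hkv
        · have h3z : P3 = 0 := by rw [hP3def]; exact max_eq_right (by linarith)
          rw [h3z]
          linarith [mul_nonneg (by linarith : (0:ℝ) ≤ κ - 1 + kv) hkv]
        · have h3v : P3 = -kv := by rw [hP3def]; exact max_eq_left (by linarith)
          rw [h3v]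
          linarith [mul_le_mul_of_nonneg_right
            (by linarith : κ - 1 + kv ≤ κ + 1) (by linarith : (0:ℝ) ≤ -kv)]
      have hkb : (1 - kv) * bv ≤ 2 * P1 := by
        have e0 := mul_nonneg (by linarith : (0:ℝ) ≤ -bv)
          (by linarith : (0:ℝ) ≤ 3 - kv)
        linarith [e0, hv1]
      have hDb1 : -Db ≤ βk * ((κ+1) * P3) + βb * (2 * P1) := by
        have e1 := mul_le_mul_of_nonneg_left hkk hβk.le
        have e2 := mul_le_mul_of_nonneg_left hkb hβb.le
        have e4 : -Db = βk * (-((κ - 1 + kv) * kv)) + βb * ((1 - kv) * bv)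
            - 1 / (1 + (θb * zv) ^ hbe) + bv := by rw [hDbdef]; ring
        rw [e4]
        linarith [hHillpos]
      have e3 := mul_le_mul_of_nonneg_left hDb1 (by positivity : (0:ℝ) ≤ 2*P1)
      have f1 : 0 ≤ (βk*(κ+1)) * (P1 - P3)^2 := mul_nonneg ha1 (sq_nonneg _)
      have f2 : 0 ≤ (βk*(κ+1)) * (P2^2 + P4^2 + P5^2 + P6^2) :=
        mul_nonneg ha1 (by positivity)
      have f3 : 0 ≤ βb * (P2^2 + P3^2 + P4^2 + P5^2 + P6^2) :=
        mul_nonneg hβb.le (by positivity)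
      linarith [e3, f1, f2, f3]
  -- Term 2
  have T2 : 2 * P2 * Db ≤ (βk + (βk*(κ+2) + βb*(B+1)) + 2*θb) * (P1^2 + P2^2 + P3^2 + P4^2 + P5^2 + P6^2) := by
    rcases le_or_gt bv B with hbv | hbv
    · have hz2 : P2 = 0 := by rw [hP2def]; exact max_eq_right (by linarith)
      have hL : 2 * P2 * Db = 0 := by rw [hz2]; ring
      linarith [mul_nonneg hC2 hW, hL]
    · have hv2 : P2 = bv - B := by rw [hP2def]; exact max_eq_left (by linarith)
      have hbvp : 0 < bv := by linarith
      have hkk2 : (κ - 1 + kv) * kv ≤ κ + (κ+2) * P4 + P3 := by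
        rcases le_or_gt kv 0 with hkv | hkv
        · have h3v : P3 = -kv := by rw [hP3def]; exact max_eq_left (by linarith)
          have h4z : P4 = 0 := by rw [hP4def]; exact max_eq_right (by linarith)
          rw [h3v, h4z]
          linarith [mul_nonneg (by linarith : (0:ℝ) ≤ -kv)
            (by linarith : (0:ℝ) ≤ κ + kv)]
        · rcases le_or_gt kv 1 with hkv1 | hkv1
          · have h3z : P3 = 0 := by rw [hP3def]; exact max_eq_right (by linarith)
            have h4z : P4 = 0 := by rw [hP4def]; exact max_eq_right (by linarith)
            rw [h3z, h4z]
            linarith [mul_nonneg (by linarith : (0:ℝ) ≤ 1 - kv)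
              (by linarith : (0:ℝ) ≤ κ - 1 + kv)]
          · have h3z : P3 = 0 := by rw [hP3def]; exact max_eq_right (by linarith)
            have h4v : P4 = kv - 1 := by rw [hP4def]; exact max_eq_left (by linarith)
            rw [h3z, h4v]
            linarith [mul_nonneg (by linarith : (0:ℝ) ≤ kv - 1)
              (by linarith : (0:ℝ) ≤ 1 - (kv - 1))]
      have hkb2 : -((1 - kv) * bv) ≤ (B+1) * P4 := by
        rcases le_or_gt kv 1 with hkv1 | hkv1
        · have g1 : 0 ≤ (1 - kv) * bv := mul_nonneg (by linarith) hbvp.le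
          have g2 : 0 ≤ (B+1)*P4 := mul_nonneg (by linarith) hP4
          linarith
        · have h4v : P4 = kv - 1 := by rw [hP4def]; exact max_eq_left (by linarith)
          rw [h4v]
          linarith [mul_le_mul_of_nonneg_left
            (by linarith : bv ≤ B + 1) (by linarith : (0:ℝ) ≤ kv - 1)]
      have hDb2 : Db ≤ βk * P3 + (βk*(κ+2) + βb*(B+1)) * P4 + 2*θb*P5 := by
        have e1 := mul_le_mul_of_nonneg_left hkk2 hβk.le
        have e2 := mul_le_mul_of_nonneg_left hkb2 hβb.le
        have e4 : Db = βk * ((κ - 1 + kv) * kv) + βb * (-((1 - kv) * bv))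
            + 1 / (1 + (θb * zv) ^ hbe) - bv := by rw [hDbdef]; ring
        rw [e4]
        have hbb : bv = B + P2 := by rw [hv2]; ring
        linarith [e1, e2, hHill, hP2, hB, hbb]
      have e3 := mul_le_mul_of_nonneg_left hDb2 (by positivity : (0:ℝ) ≤ 2*P2)
      have f1 : 0 ≤ βk * (P2 - P3)^2 := mul_nonneg hβk.le (sq_nonneg _)
      have f2 : 0 ≤ βk * (P1^2 + P4^2 + P5^2 + P6^2) := mul_nonneg hβk.le (by positivity)
      have f3 : 0 ≤ (βk*(κ+2) + βb*(B+1)) * (P2 - P4)^2 :=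
        mul_nonneg (by linarith) (sq_nonneg _)
      have f4 : 0 ≤ (βk*(κ+2) + βb*(B+1)) * (P1^2 + P3^2 + P5^2 + P6^2) :=
        mul_nonneg (by linarith) (by positivity)
      have f5 : 0 ≤ θb * (P2 - P5)^2 := mul_nonneg hθb.le (sq_nonneg _)
      have f6 : 0 ≤ θb * (P1^2 + P3^2 + P4^2 + P6^2) := mul_nonneg hθb.le (by positivity)
      linarith [e3, f1, f2, f3, f4, f5, f6]
  -- Term 3
  have T3 : 2 * P3 * (-Dk) ≤ (ε⁻¹ * (2*βb + 2*βk)) * (P1^2 + P2^2 + P3^2 + P4^2 + P5^2 + P6^2) := by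
    rcases le_or_gt 0 kv with hkv | hkv
    · have h3z : P3 = 0 := by rw [hP3def]; exact max_eq_right (by linarith)
      have hL : 2 * P3 * (-Dk) = 0 := by rw [h3z]; ring
      linarith [mul_nonneg hC3 hW, hL]
    · have h3v : P3 = -kv := by rw [hP3def]; exact max_eq_left (by linarith)
      have hkk3 : (κ - 1 + kv) * kv ≤ P3 := by
        rw [h3v]
        linarith [mul_nonneg (by linarith : (0:ℝ) ≤ -kv)
          (by linarith : (0:ℝ) ≤ κ + kv)]
      have hkb3 : -((1 - kv) * bv) ≤ 2 * P1 := by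
        rcases le_or_gt 0 bv with hbv | hbv
        · have g1 : 0 ≤ (1 - kv) * bv := mul_nonneg (by linarith) hbv
          linarith
        · have hv1 : P1 = -bv := by rw [hP1def]; exact max_eq_left (by linarith)
          have e0 := mul_nonneg (by linarith : (0:ℝ) ≤ -bv)
            (by linarith : (0:ℝ) ≤ 1 + kv)
          linarith [e0, hv1]
      have hDk3 : -Dk ≤ ε⁻¹ * (βk * P3 + βb * (2 * P1)) := by
        have e4 : -Dk = ε⁻¹ * (βk * ((κ - 1 + kv) * kv)
            + βb * (-((1 - kv) * bv))) := by rw [hDkdef]; field_simp; ring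
        rw [e4]
        apply mul_le_mul_of_nonneg_left _ hεi
        have e1 := mul_le_mul_of_nonneg_left hkk3 hβk.le
        have e2 := mul_le_mul_of_nonneg_left hkb3 hβb.le
        linarith
      have e3 := mul_le_mul_of_nonneg_left hDk3 (by positivity : (0:ℝ) ≤ 2*P3)
      have f1 : 0 ≤ ε⁻¹ * βb * (P1 - P3)^2 := mul_nonneg heβ (sq_nonneg _)
      have f2 : 0 ≤ ε⁻¹ * βb * (P2^2 + P4^2 + P5^2 + P6^2) := mul_nonneg heβ (by positivity)
      have f3 : 0 ≤ ε⁻¹ * βk * (P1^2 + P2^2 + P4^2 + P5^2 + P6^2) :=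
        mul_nonneg heκ (by positivity)
      linarith [e3, f1, f2, f3]
  -- Term 4
  have T4 : 2 * P4 * Dk ≤ (ε⁻¹ * (2*βb)) * (P1^2 + P2^2 + P3^2 + P4^2 + P5^2 + P6^2) := by
    rcases le_or_gt kv 1 with hkv | hkv
    · have h4z : P4 = 0 := by rw [hP4def]; exact max_eq_right (by linarith)
      have hL : 2 * P4 * Dk = 0 := by rw [h4z]; ring
      linarith [mul_nonneg hC4 hW, hL]
    · have h4v : P4 = kv - 1 := by rw [hP4def]; exact max_eq_left (by linarith)
      have hf1 : (1 - kv) * bv ≤ P4 := by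
        rcases le_or_gt 0 bv with hbv | hbv
        · have g1 : (1 - kv) * bv ≤ 0 :=
            mul_nonpos_of_nonpos_of_nonneg (by linarith) hbv
          linarith
        · rw [h4v]
          linarith [mul_le_mul_of_nonneg_left
            (by linarith : -bv ≤ 1) (by linarith : (0:ℝ) ≤ kv - 1)]
      have hf2 : 0 ≤ (κ - 1 + kv) * kv := mul_nonneg (by linarith) (by linarith)
      have hDk4 : Dk ≤ ε⁻¹ * (βb * P4) := by
        have e4 : Dk = ε⁻¹ * (βb * ((1 - kv) * bv)
            - βk * ((κ - 1 + kv) * kv)) := by rw [hDkdef]; field_simp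
        rw [e4]
        apply mul_le_mul_of_nonneg_left _ hεi
        have e1 := mul_le_mul_of_nonneg_left hf1 hβb.le
        have e2 := mul_le_mul_of_nonneg_left hf2 hβk.le
        linarith [e1, e2]
      have e3 := mul_le_mul_of_nonneg_left hDk4 (by positivity : (0:ℝ) ≤ 2*P4)
      have f2 : 0 ≤ ε⁻¹ * βb * (P1^2 + P2^2 + P3^2 + P5^2 + P6^2) :=
        mul_nonneg heβ (by positivity)
      linarith [e3, f2]
  -- Term 5
  have T5 : 2 * P5 * (-Dz) ≤ (2*δz) * (P1^2 + P2^2 + P3^2 + P4^2 + P5^2 + P6^2) := by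
    rcases le_or_gt 0 zv with hzv | hzv
    · have h5z : P5 = 0 := by rw [hP5def]; exact max_eq_right (by linarith)
      have hL : 2 * P5 * (-Dz) = 0 := by rw [h5z]; ring
      linarith [mul_nonneg hC5 hW, hL]
    · have h5v : P5 = -zv := by rw [hP5def]; exact max_eq_left (by linarith)
      have hg1 : -((1 - zv) * kv) ≤ 2 * P3 := by
        rcases le_or_gt 0 kv with hkv | hkv
        · have g1 : 0 ≤ (1 - zv) * kv := mul_nonneg (by linarith) hkv
          linarith
        · have h3v : P3 = -kv := by rw [hP3def]; exact max_eq_left (by linarith)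
          linarith [mul_le_mul_of_nonneg_right
            (by linarith : 1 - zv ≤ 2) (by linarith : (0:ℝ) ≤ -kv), h3v]
      have hg2 : ρz * zv / (1 + (θz * kv) ^ hze) ≤ 0 := by
        apply div_nonpos_of_nonpos_of_nonneg _ hD2p.le
        exact mul_nonpos_iff.mpr (Or.inl ⟨hρz.le, hzv.le⟩)
      have hDz5 : -Dz ≤ δz * (2 * P3) := by
        have e4 : -Dz = δz * (-((1 - zv) * kv))
            + ρz * zv / (1 + (θz * kv) ^ hze) := by rw [hDzdef]; ring
        rw [e4]
        have e1 := mul_le_mul_of_nonneg_left hg1 hδz.le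
        linarith
      have e3 := mul_le_mul_of_nonneg_left hDz5 (by positivity : (0:ℝ) ≤ 2*P5)
      have f1 : 0 ≤ δz * (P3 - P5)^2 := mul_nonneg hδz.le (sq_nonneg _)
      have f2 : 0 ≤ δz * (P1^2 + P2^2 + P4^2 + P6^2) := mul_nonneg hδz.le (by positivity)
      linarith [e3, f1, f2]
  -- Term 6
  have T6 : 2 * P6 * Dz ≤ (2*δz) * (P1^2 + P2^2 + P3^2 + P4^2 + P5^2 + P6^2) := by
    rcases le_or_gt zv 1 with hzv | hzv
    · have h6z : P6 = 0 := by rw [hP6def]; exact max_eq_right (by linarith)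
      have hL : 2 * P6 * Dz = 0 := by rw [h6z]; ring
      linarith [mul_nonneg hC5 hW, hL]
    · have h6v : P6 = zv - 1 := by rw [hP6def]; exact max_eq_left (by linarith)
      have hg1 : (1 - zv) * kv ≤ P6 := by
        rcases le_or_gt 0 kv with hkv | hkv
        · have g1 : (1 - zv) * kv ≤ 0 :=
            mul_nonpos_of_nonpos_of_nonneg (by linarith) hkv
          linarith
        · rw [h6v]
          linarith [mul_nonneg (by linarith : (0:ℝ) ≤ zv - 1)
            (by linarith : (0:ℝ) ≤ 1 + kv)]
      have hg2 : 0 ≤ ρz * zv / (1 + (θz * kv) ^ hze) :=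
        div_nonneg (mul_nonneg hρz.le (by linarith)) hD2p.le
      have hDz6 : Dz ≤ δz * P6 := by
        rw [hDzdef]
        have e1 := mul_le_mul_of_nonneg_left hg1 hδz.le
        linarith
      have e3 := mul_le_mul_of_nonneg_left hDz6 (by positivity : (0:ℝ) ≤ 2*P6)
      have f2 : 0 ≤ δz * (P1^2 + P2^2 + P3^2 + P4^2 + P5^2) :=
        mul_nonneg hδz.le (by positivity)
      linarith [e3, f2]
  refine le_trans (add_le_add (add_le_add (add_le_add (add_le_add
    (add_le_add T1 T2) T3) T4) T5) T6) (le_of_eq ?_)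
  ring


lemma maxsq_le {a : ℝ} (h : max a 0 ^ 2 = 0) : a ≤ 0 :=
  max_eq_right_iff.mp (by simpa using sq_eq_zero_iff.mp h)

lemma sumsq_zero {a1 a2 a3 a4 a5 a6 : ℝ}
    (h : max a1 0 ^ 2 + max a2 0 ^ 2 + max a3 0 ^ 2 + max a4 0 ^ 2
      + max a5 0 ^ 2 + max a6 0 ^ 2 = 0) :
    a1 ≤ 0 ∧ a2 ≤ 0 ∧ a3 ≤ 0 ∧ a4 ≤ 0 ∧ a5 ≤ 0 ∧ a6 ≤ 0 := by
  have n1 := sq_nonneg (max a1 0); have n2 := sq_nonneg (max a2 0)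
  have n3 := sq_nonneg (max a3 0); have n4 := sq_nonneg (max a4 0)
  have n5 := sq_nonneg (max a5 0); have n6 := sq_nonneg (max a6 0)
  exact ⟨maxsq_le (by linarith), maxsq_le (by linarith), maxsq_le (by linarith),
    maxsq_le (by linarith), maxsq_le (by linarith), maxsq_le (by linarith)⟩

/-- Positive invariance of `M = [0, 1+βk κ] × [0,1] × [0,1]` for the nondimensionalised
BR signalling ODE system. -/
theorem stmt_2
    (κ βk βb θb ε δz ρz θz : ℝ) (hbe hze : ℕ)
    (hκ : 1 ≤ κ) (hβk : 0 < βk) (hβb : 0 < βb) (hθb : 0 < θb) (hε : 0 < ε)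
    (hδz : 0 < δz) (hρz : 0 < ρz) (hθz : 0 < θz) (hhb : 0 < hbe) (hhz : 0 < hze)
    (b k z : ℝ → ℝ)
    (hb : ∀ t ∈ Set.Ici (0 : ℝ), HasDerivAt b
      (βk * (κ - 1 + k t) * k t - βb * (1 - k t) * b t
        + 1 / (1 + (θb * z t) ^ hbe) - b t) t)
    (hk : ∀ t ∈ Set.Ici (0 : ℝ), HasDerivAt k
      ((1 / ε) * (βb * (1 - k t) * b t - βk * (κ - 1 + k t) * k t)) t)
    (hz : ∀ t ∈ Set.Ici (0 : ℝ), HasDerivAt z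
      (δz * (1 - z t) * k t - ρz * z t / (1 + (θz * k t) ^ hze)) t)
    (hb0 : b 0 ∈ Set.Icc (0 : ℝ) (1 + βk * κ))
    (hk0 : k 0 ∈ Set.Icc (0 : ℝ) 1)
    (hz0 : z 0 ∈ Set.Icc (0 : ℝ) 1) :
    ∀ t ∈ Set.Ici (0 : ℝ),
      b t ∈ Set.Icc (0 : ℝ) (1 + βk * κ) ∧ k t ∈ Set.Icc (0 : ℝ) 1 ∧
        z t ∈ Set.Icc (0 : ℝ) 1 := by
  have hβkκ : 0 ≤ βk * κ := mul_nonneg hβk.le (by linarith)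
  have hB1 : (1:ℝ) ≤ 1 + βk * κ := by linarith
  -- the margin m
  set m : ℝ := min 1 (min ((2*θb)⁻¹) ((2*θz)⁻¹)) with hmdef
  have hm0 : 0 < m := lt_min one_pos (lt_min (by positivity) (by positivity))
  have hm1 : m ≤ 1 := min_le_left _ _
  have hmb : θb * m ≤ 1/2 := by
    have h1 : m ≤ (2*θb)⁻¹ := le_trans (min_le_right _ _) (min_le_left _ _)
    have h2 : θb * (2*θb)⁻¹ = 1/2 := by field_simp
    calc θb * m ≤ θb * (2*θb)⁻¹ := mul_le_mul_of_nonneg_left h1 hθb.le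
      _ = 1/2 := h2
  have hmz : θz * m ≤ 1/2 := by
    have h1 : m ≤ (2*θz)⁻¹ := le_trans (min_le_right _ _) (min_le_right _ _)
    have h2 : θz * (2*θz)⁻¹ = 1/2 := by field_simp
    calc θz * m ≤ θz * (2*θz)⁻¹ := mul_le_mul_of_nonneg_left h1 hθz.le
      _ = 1/2 := h2
  -- the Lyapunov-type function
  set V : ℝ → ℝ := fun t => max (-(b t)) 0 ^ 2 + max (b t - (1 + βk * κ)) 0 ^ 2
      + max (-(k t)) 0 ^ 2 + max (k t - 1) 0 ^ 2
      + max (-(z t)) 0 ^ 2 + max (z t - 1) 0 ^ 2 with hVdef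
  set Vd : ℝ → ℝ := fun t =>
      2 * max (-(b t)) 0 *
        (-(βk * (κ - 1 + k t) * k t - βb * (1 - k t) * b t
          + 1 / (1 + (θb * z t) ^ hbe) - b t))
      + 2 * max (b t - (1 + βk * κ)) 0 *
        (βk * (κ - 1 + k t) * k t - βb * (1 - k t) * b t
          + 1 / (1 + (θb * z t) ^ hbe) - b t)
      + 2 * max (-(k t)) 0 *
        (-((1/ε) * (βb * (1 - k t) * b t - βk * (κ - 1 + k t) * k t)))
      + 2 * max (k t - 1) 0 *
        ((1/ε) * (βb * (1 - k t) * b t - βk * (κ - 1 + k t) * k t))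
      + 2 * max (-(z t)) 0 *
        (-(δz * (1 - z t) * k t - ρz * z t / (1 + (θz * k t) ^ hze)))
      + 2 * max (z t - 1) 0 *
        (δz * (1 - z t) * k t - ρz * z t / (1 + (θz * k t) ^ hze)) with hVddef
  have hVderiv : ∀ t ∈ Set.Ici (0:ℝ), HasDerivAt V (Vd t) t := by
    intro t ht
    have Hb := hb t ht
    have Hk := hk t ht
    have Hz := hz t ht
    have d1 := (posSq_hasDerivAt (-(b t))).comp t Hb.neg
    have d2 := (posSq_hasDerivAt (b t - (1 + βk * κ))).comp t (Hb.sub_const (1 + βk * κ))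
    have d3 := (posSq_hasDerivAt (-(k t))).comp t Hk.neg
    have d4 := (posSq_hasDerivAt (k t - 1)).comp t (Hk.sub_const 1)
    have d5 := (posSq_hasDerivAt (-(z t))).comp t Hz.neg
    have d6 := (posSq_hasDerivAt (z t - 1)).comp t (Hz.sub_const 1)
    exact (((((d1.add d2).add d3).add d4).add d5).add d6)
  have hVcont : ∀ t ∈ Set.Ici (0:ℝ), ContinuousWithinAt V (Set.Ici 0) t :=
    fun t ht => (hVderiv t ht).continuousAt.continuousWithinAt
  have hVnonneg : ∀ t, 0 ≤ V t := by
    intro t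
    simp only [hVdef]
    positivity
  have hV0 : V 0 = 0 := by
    have e1 : max (-(b 0)) 0 = 0 := max_eq_right (by linarith [hb0.1])
    have e2 : max (b 0 - (1 + βk * κ)) 0 = 0 := max_eq_right (by linarith [hb0.2])
    have e3 : max (-(k 0)) 0 = 0 := max_eq_right (by linarith [hk0.1])
    have e4 : max (k 0 - 1) 0 = 0 := max_eq_right (by linarith [hk0.2])
    have e5 : max (-(z 0)) 0 = 0 := max_eq_right (by linarith [hz0.1])
    have e6 : max (z 0 - 1) 0 = 0 := max_eq_right (by linarith [hz0.2])
    simp only [hVdef, e1, e2, e3, e4, e5, e6]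
    norm_num
  -- the Grönwall constant
  obtain ⟨K, hK⟩ := key_bound κ βk βb θb ε δz ρz θz (1 + βk * κ) m hbe hze
    hκ hβk hβb hθb hε hδz hρz hθz hhb hhz rfl hm0 hm1 hmb hmz
  -- main claim : V vanishes on [0,∞)
  have main : ∀ t : ℝ, 0 ≤ t → V t = 0 := by
    by_contra hcon
    push_neg at hcon
    obtain ⟨t0, ht0, ht0ne⟩ := hcon
    set A : Set ℝ := {t | 0 ≤ t ∧ ∀ s, 0 ≤ s → s ≤ t → V s = 0} with hAdef
    have hA0 : (0:ℝ) ∈ A := by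
      refine ⟨le_refl 0, fun s hs1 hs2 => ?_⟩
      have : s = 0 := le_antisymm hs2 hs1
      rw [this]; exact hV0
    have hAne : A.Nonempty := ⟨0, hA0⟩
    have hbdd : ∀ a ∈ A, a ≤ t0 := by
      intro a ha
      by_contra hlt
      push_neg at hlt
      exact ht0ne (ha.2 t0 ht0 hlt.le)
    have hAbdd : BddAbove A := ⟨t0, fun a ha => hbdd a ha⟩
    set T := sSup A with hTdef
    have hT0 : 0 ≤ T := le_csSup hAbdd hA0
    -- every s ∈ [0,T) satisfies V s = 0
    have hfore : ∀ s, 0 ≤ s → s < T → V s = 0 := by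
      intro s hs0 hsT
      obtain ⟨a, haA, hsa⟩ := exists_lt_of_lt_csSup hAne hsT
      exact haA.2 s hs0 hsa.le
    have hVT : V T = 0 := by
      rcases eq_or_lt_of_le hT0 with h | h
      · rw [← h]; exact hV0
      · have hne : (0:ℝ) ≠ T := ne_of_lt h
        have hcl : T ∈ closure (Set.Ico (0:ℝ) T) := by
          rw [closure_Ico hne]
          exact ⟨hT0, le_refl T⟩
        haveI : (nhdsWithin T (Set.Ico (0:ℝ) T)).NeBot :=
          mem_closure_iff_nhdsWithin_neBot.mp hcl
        have h1 : Filter.Tendsto V (nhdsWithin T (Set.Ico (0:ℝ) T)) (nhds (V T)) :=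
          (hVcont T hT0).mono_left (nhdsWithin_mono _ (fun x hx => hx.1))
        have h2 : Filter.Tendsto V (nhdsWithin T (Set.Ico (0:ℝ) T)) (nhds 0) := by
          refine Filter.Tendsto.congr' ?_ tendsto_const_nhds
          filter_upwards [self_mem_nhdsWithin] with x hx
          exact (hfore x hx.1 hx.2).symm
        exact tendsto_nhds_unique h1 h2
    -- the state at time T lies in M
    have hVT' := hVT
    simp only [hVdef] at hVT'
    obtain ⟨e1, e2, e3, e4, e5, e6⟩ := sumsq_zero hVT'
    -- find a small interval to the right of T on which we stay in the enlarged box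
    have hcb : ContinuousWithinAt b (Set.Ici 0) T := (hb T hT0).continuousAt.continuousWithinAt
    have hck : ContinuousWithinAt k (Set.Ici 0) T := (hk T hT0).continuousAt.continuousWithinAt
    have hcz : ContinuousWithinAt z (Set.Ici 0) T := (hz T hT0).continuousAt.continuousWithinAt
    have hev : (b ⁻¹' Set.Ioo (b T - m) (b T + m)
        ∩ (k ⁻¹' Set.Ioo (k T - m) (k T + m)
        ∩ z ⁻¹' Set.Ioo (z T - m) (z T + m))) ∈ nhdsWithin T (Set.Ici 0) := by
      refine Filter.inter_mem ?_ (Filter.inter_mem ?_ ?_)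
      · exact hcb (Ioo_mem_nhds (by linarith) (by linarith))
      · exact hck (Ioo_mem_nhds (by linarith) (by linarith))
      · exact hcz (Ioo_mem_nhds (by linarith) (by linarith))
    rw [Metric.mem_nhdsWithin_iff] at hev
    obtain ⟨δ, hδ0, hδsub⟩ := hev
    set η := δ/2 with hηdef
    have hη0 : 0 < η := by positivity
    have hsub : Set.Icc T (T + η) ⊆ b ⁻¹' Set.Ioo (b T - m) (b T + m)
        ∩ (k ⁻¹' Set.Ioo (k T - m) (k T + m)
        ∩ z ⁻¹' Set.Ioo (z T - m) (z T + m)) := by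
      intro s hs
      apply hδsub
      constructor
      · rw [Metric.mem_ball, Real.dist_eq, abs_of_nonneg (by linarith [hs.1])]
        linarith [hs.2]
      · exact Set.mem_Ici.mpr (by linarith [hs.1])
    have hboxs : ∀ s ∈ Set.Icc T (T + η), -m ≤ b s ∧ b s ≤ (1 + βk * κ) + m
        ∧ -m ≤ k s ∧ k s ≤ 1 + m ∧ -m ≤ z s ∧ z s ≤ 1 + m := by
      intro s hs
      have hmem := hsub hs
      simp only [Set.mem_inter_iff, Set.mem_preimage, Set.mem_Ioo] at hmem
      obtain ⟨⟨a1, a2⟩, ⟨a3, a4⟩, ⟨a5, a6⟩⟩ := hmem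
      exact ⟨by linarith, by linarith, by linarith, by linarith, by linarith, by linarith⟩
    -- Grönwall on [T, T+η]
    have hcont : ContinuousOn V (Set.Icc T (T + η)) := by
      intro s hs
      exact (hVcont s (Set.mem_Ici.mpr (by linarith [hs.1]))).mono
        (fun x hx => Set.mem_Ici.mpr (by linarith [hx.1]))
    have hslope : ∀ x ∈ Set.Ico T (T + η), ∀ r, Vd x < r →
        ∃ᶠ w in nhdsWithin x (Set.Ioi x), (w - x)⁻¹ * (V w - V x) < r := by
      intro x hx r hr
      exact ((hVderiv x (Set.mem_Ici.mpr (by linarith [hx.1]))).hasDerivWithinAt).liminf_right_slope_le hr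
    have hbound : ∀ x ∈ Set.Ico T (T + η), Vd x ≤ K * V x + 0 := by
      intro x hx
      obtain ⟨g1, g2, g3, g4, g5, g6⟩ := hboxs x (Set.Ico_subset_Icc_self hx)
      have := hK (b x) (k x) (z x) g1 g2 g3 g4 g5 g6
      rw [add_zero]
      simpa [hVdef, hVddef] using this
    have hgron := le_gronwallBound_of_liminf_deriv_right_le hcont hslope
      (le_of_eq hVT) hbound
    have hzero : ∀ x ∈ Set.Icc T (T + η), V x = 0 := by
      intro x hx
      have h1 := hgron x hx
      rw [gronwallBound_ε0_δ0] at h1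
      exact le_antisymm h1 (hVnonneg x)
    have hTη : T + η ∈ A := by
      refine ⟨by linarith, fun s hs0 hsle => ?_⟩
      rcases le_or_gt s T with h | h
      · rcases lt_or_eq_of_le h with h' | h'
        · exact hfore s hs0 h'
        · rw [h']; exact hVT
      · exact hzero s ⟨h.le, hsle⟩
    have := le_csSup hAbdd hTη
    rw [← hTdef] at this
    linarith
  intro t ht
  have hv := main t ht
  simp only [hVdef] at hv
  obtain ⟨e1, e2, e3, e4, e5, e6⟩ := sumsq_zero hv
  exact ⟨⟨by linarith, by linarith⟩, ⟨by linarith, by linarith⟩, ⟨by linarith, by linarith⟩⟩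
end

section
/- The function g(k) = β_k(κ−1+k)·k·(1 + (θ_b δ_z k (1+(θ_z k)^{h_z}) / (ρ_z + δ_z k (1+(θ_z k)^{h_z})))^{h_b}) − β_b(1−k) is strictly increasing on [0,1]; in particular its derivative satisfies g'(k) ≥ β_b > 0 for all k ∈ [0,1]. -/
/-- The steady-state function `g` is strictly increasing on `[0,1]`, with derivative
bounded below by `βb > 0`. -/
theorem stmt_5
    (κ βk βb θb δz ρz θz : ℝ) (hbe hze : ℕ)
    (hκ : 1 ≤ κ) (hβk : 0 < βk) (hβb : 0 < βb) (hθb : 0 < θb)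
    (hδz : 0 < δz) (hρz : 0 < ρz) (hθz : 0 < θz) (hhb : 0 < hbe) (hhz : 0 < hze)
    (g H g' : ℝ → ℝ)
    (hH : ∀ k, H k = θb * δz * k * (1 + (θz * k) ^ hze)
        / (ρz + δz * k * (1 + (θz * k) ^ hze)))
    (hg : ∀ k, g k = βk * (κ - 1 + k) * k * (1 + (H k) ^ hbe) - βb * (1 - k))
    (hg' : ∀ k, g' k = βb + βk * (κ - 1 + 2 * k) * (1 + (H k) ^ hbe)
      + βk * (κ - 1 + k) * k *
        ((hbe : ℝ) * (H k) ^ (hbe - 1) *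
          (θb * δz * ρz * (1 + (1 + (hze : ℝ)) * (θz * k) ^ hze)
            / (ρz + δz * k * (1 + (θz * k) ^ hze)) ^ 2))) :
    StrictMonoOn g (Set.Icc (0 : ℝ) 1) ∧
    (∀ k ∈ Set.Icc (0 : ℝ) 1, HasDerivAt g (g' k) k ∧ βb ≤ g' k) := by
  obtain ⟨nb, rfl⟩ : ∃ nb, hbe = nb + 1 := ⟨hbe - 1, (Nat.succ_pred_eq_of_pos hhb).symm⟩
  obtain ⟨nz, rfl⟩ : ∃ nz, hze = nz + 1 := ⟨hze - 1, (Nat.succ_pred_eq_of_pos hhz).symm⟩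
  have hDpos : ∀ k : ℝ, 0 ≤ k → 0 < ρz + δz * k * (1 + (θz * k) ^ (nz + 1)) := by
    intro k hk
    have h1 : 0 ≤ (θz * k) ^ (nz + 1) := pow_nonneg (by positivity) _
    nlinarith [mul_nonneg hδz.le hk]
  have hHnn : ∀ k : ℝ, 0 ≤ k → 0 ≤ H k := by
    intro k hk
    rw [hH k]
    have h1 : 0 ≤ (θz * k) ^ (nz + 1) := pow_nonneg (by positivity) _
    have := hDpos k hk
    positivity
  have hderiv : ∀ k : ℝ, 0 ≤ k → HasDerivAt g (g' k) k := by
    intro k hk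
    have hD := hDpos k hk
    have hDne : ρz + δz * k * (1 + (θz * k) ^ (nz + 1)) ≠ 0 := ne_of_gt hD
    have hq : HasDerivAt (fun x : ℝ => θz * x) θz k := by
      simpa using (hasDerivAt_id k).const_mul θz
    have hp : HasDerivAt (fun x : ℝ => (θz * x) ^ (nz + 1))
        (((nz + 1 : ℕ) : ℝ) * (θz * k) ^ (nz + 1 - 1) * θz) k := hq.pow _
    have hone : HasDerivAt (fun x : ℝ => 1 + (θz * x) ^ (nz + 1))
        (((nz + 1 : ℕ) : ℝ) * (θz * k) ^ (nz + 1 - 1) * θz) k := by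
      exact ((hasDerivAt_const k (1:ℝ)).add hp).congr_deriv (by ring)
    have hN : HasDerivAt (fun x : ℝ => δz * x * (1 + (θz * x) ^ (nz + 1)))
        (δz * (1 + (θz * k) ^ (nz + 1)) +
          δz * k * (((nz + 1 : ℕ) : ℝ) * (θz * k) ^ (nz + 1 - 1) * θz)) k := by
      exact (((hasDerivAt_id k).const_mul δz).mul hone).congr_deriv (by simp)
    set N' : ℝ := δz * (1 + (θz * k) ^ (nz + 1)) +
          δz * k * (((nz + 1 : ℕ) : ℝ) * (θz * k) ^ (nz + 1 - 1) * θz) with hN'def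
    have hNum : HasDerivAt (fun x : ℝ => θb * δz * x * (1 + (θz * x) ^ (nz + 1)))
        (θb * N') k := by
      have h2 := hN.const_mul θb
      have h3 : (fun x : ℝ => θb * (δz * x * (1 + (θz * x) ^ (nz + 1))))
          = fun x : ℝ => θb * δz * x * (1 + (θz * x) ^ (nz + 1)) := by
        funext x; ring
      rw [h3] at h2
      exact h2
    have hDen : HasDerivAt (fun x : ℝ => ρz + δz * x * (1 + (θz * x) ^ (nz + 1))) N' k := by
      exact ((hasDerivAt_const k ρz).add hN).congr_deriv (by ring)
    set Hd : ℝ := (θb * N' * (ρz + δz * k * (1 + (θz * k) ^ (nz + 1)))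
          - θb * δz * k * (1 + (θz * k) ^ (nz + 1)) * N')
          / (ρz + δz * k * (1 + (θz * k) ^ (nz + 1))) ^ 2 with hHddef
    have hHfun : HasDerivAt H Hd k := by
      have hEq : H = fun x => θb * δz * x * (1 + (θz * x) ^ (nz + 1))
          / (ρz + δz * x * (1 + (θz * x) ^ (nz + 1))) := funext hH
      rw [hEq, hHddef]
      exact hNum.div hDen hDne
    have hHpow : HasDerivAt (fun x => 1 + (H x) ^ (nb + 1))
        (((nb : ℝ) + 1) * (H k) ^ nb * Hd) k := by
      exact ((hasDerivAt_const k (1:ℝ)).add (hHfun.pow (nb+1))).congr_deriv (by simp)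
    have hP : HasDerivAt (fun x : ℝ => βk * (κ - 1 + x) * x)
        (βk * ((κ - 1 + k) + k)) k := by
      have h1 : HasDerivAt (fun x : ℝ => (κ - 1 + x) * x) (1 * k + (κ - 1 + k) * 1) k :=
        ((hasDerivAt_id k).const_add (κ - 1)).mul (hasDerivAt_id k)
      have h2 := h1.const_mul βk
      have h3 : (fun x : ℝ => βk * ((κ - 1 + x) * x)) = fun x : ℝ => βk * (κ - 1 + x) * x := by
        funext x; ring
      rw [h3] at h2
      exact h2.congr_deriv (by ring)
    have hlin : HasDerivAt (fun x : ℝ => βb * (1 - x)) (βb * (0 - 1)) k := by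
      simpa using ((hasDerivAt_const k (1:ℝ)).sub (hasDerivAt_id k)).const_mul βb
    have htot : HasDerivAt g
        (βk * ((κ - 1 + k) + k) * (1 + (H k) ^ (nb + 1))
          + βk * (κ - 1 + k) * k * (((nb : ℝ) + 1) * (H k) ^ nb * Hd)
          - βb * (0 - 1)) k := by
      have hgEq : g = fun x => βk * (κ - 1 + x) * x * (1 + (H x) ^ (nb + 1)) - βb * (1 - x) :=
        funext hg
      rw [hgEq]
      exact (hP.mul hHpow).sub hlin
    have hkey : βk * ((κ - 1 + k) + k) * (1 + (H k) ^ (nb + 1))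
          + βk * (κ - 1 + k) * k * (((nb : ℝ) + 1) * (H k) ^ nb * Hd)
          - βb * (0 - 1) = g' k := by
      rw [hg' k, hHddef, hN'def]
      have hHk := hH k
      simp only [Nat.add_sub_cancel, Nat.cast_add, Nat.cast_one] at *
      rw [hHk]
      field_simp
      ring
    rw [hkey] at htot
    exact htot
  have hbound : ∀ k ∈ Set.Icc (0:ℝ) 1, βb ≤ g' k := by
    intro k hk
    obtain ⟨hk0, hk1⟩ := hk
    rw [hg' k]
    have hH0 := hHnn k hk0
    have hD := hDpos k hk0
    have h1 : 0 ≤ (θz * k) ^ (nz + 1) := pow_nonneg (by positivity) _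
    have h2 : 0 ≤ κ - 1 + 2 * k := by linarith
    have h3 : 0 ≤ κ - 1 + k := by linarith
    have h4 : 0 ≤ (H k) ^ (nb + 1) := pow_nonneg hH0 _
    have h5 : 0 ≤ (H k) ^ nb := pow_nonneg hH0 _
    have h6 : (0:ℝ) ≤ θb * δz * ρz * (1 + (1 + ((nz:ℝ) + 1)) * (θz * k) ^ (nz + 1))
        / (ρz + δz * k * (1 + (θz * k) ^ (nz + 1))) ^ 2 := by
      have : (0:ℝ) ≤ 1 + (1 + ((nz:ℝ) + 1)) * (θz * k) ^ (nz + 1) := by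
        have : (0:ℝ) ≤ (1 + ((nz:ℝ) + 1)) := by positivity
        nlinarith
      positivity
    have h7 : (0:ℝ) ≤ ((nb:ℝ) + 1) := by positivity
    push_cast
    nlinarith [mul_nonneg (mul_nonneg (mul_nonneg hβk.le h3) hk0)
        (mul_nonneg (mul_nonneg h7 h5) h6),
      mul_nonneg (mul_nonneg hβk.le h2) (by linarith : (0:ℝ) ≤ 1 + (H k) ^ (nb + 1))]
  refine ⟨?_, fun k hk => ⟨hderiv k hk.1, hbound k hk⟩⟩
  have hmono : StrictMonoOn g (Set.Icc (0:ℝ) 1) := by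
    apply strictMonoOn_of_deriv_pos (convex_Icc 0 1)
    · intro k hk
      exact (hderiv k hk.1).continuousAt.continuousWithinAt
    · intro k hk
      rw [interior_Icc] at hk
      rw [(hderiv k hk.1.le).deriv]
      exact lt_of_lt_of_le hβb (hbound k ⟨hk.1.le, hk.2.le⟩)
  exact hmono
end

section
/- For each parameter set with κ ≥ 1 and all of β_k, β_b, θ_b, ε, δ_z, ρ_z, θ_z positive and h_b, h_z positive naturals, the nondimensionalised BR signalling system f₁ = β_k(κ−1+k)k − β_b(1−k)b + 1/(1+(θ_b z)^{h_b}) − b = 0, f₂ = β_b(1−k)b − β_k(κ−1+k)k = 0, f₃ = δ_z(1−z)k − ρ_z z/(1+(θ_z k)^{h_z}) = 0 has exactly one solution (b*,k*,z*) in M = [0,1+β_k κ]×[0,1]². Moreover b* = β_k(κ−1+k*)k*/(β_b(1−k*)) and z* = δ_z k*(1+(θ_z k*)^{h_z})/(ρ_z + δ_z k*(1+(θ_z k*)^{h_z})). -/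
open Set

noncomputable def zf (δz ρz θz : ℝ) (hze : ℕ) (k : ℝ) : ℝ :=
  δz * k * (1 + (θz * k) ^ hze) / (ρz + δz * k * (1 + (θz * k) ^ hze))

noncomputable def Ff (κ βk βb θb δz ρz θz : ℝ) (hbe hze : ℕ) (k : ℝ) : ℝ :=
  βk * (κ - 1 + k) * k * (1 + (θb * zf δz ρz θz hze k) ^ hbe) - βb * (1 - k)

lemma denom_pos (δz ρz θz : ℝ) (hze : ℕ) (hδz : 0 < δz) (hρz : 0 < ρz) (hθz : 0 < θz)
    {k : ℝ} (hk : 0 ≤ k) : 0 < ρz + δz * k * (1 + (θz * k) ^ hze) := by positivity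

lemma zf_mem (δz ρz θz : ℝ) (hze : ℕ) (hδz : 0 < δz) (hρz : 0 < ρz) (hθz : 0 < θz)
    {k : ℝ} (hk : 0 ≤ k) : zf δz ρz θz hze k ∈ Icc (0:ℝ) 1 := by
  have hd := denom_pos δz ρz θz hze hδz hρz hθz hk
  unfold zf
  constructor
  · positivity
  · rw [div_le_one hd]
    nlinarith [pow_nonneg (mul_nonneg hθz.le hk) hze]

lemma zf_mono (δz ρz θz : ℝ) (hze : ℕ) (hδz : 0 < δz) (hρz : 0 < ρz) (hθz : 0 < θz)
    {k1 k2 : ℝ} (h0 : 0 ≤ k1) (h12 : k1 ≤ k2) :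
    zf δz ρz θz hze k1 ≤ zf δz ρz θz hze k2 := by
  have h0' : 0 ≤ k2 := le_trans h0 h12
  have hd1 := denom_pos δz ρz θz hze hδz hρz hθz h0
  have hd2 := denom_pos δz ρz θz hze hδz hρz hθz h0'
  have hD1 : 0 ≤ δz * k1 * (1 + (θz * k1) ^ hze) := by positivity
  have hD : δz * k1 * (1 + (θz * k1) ^ hze) ≤ δz * k2 * (1 + (θz * k2) ^ hze) := by
    gcongr
  unfold zf
  rw [div_le_div_iff₀ hd1 hd2]
  nlinarith

lemma Ff_strictMono (κ βk βb θb δz ρz θz : ℝ) (hbe hze : ℕ)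
    (hκ : 1 ≤ κ) (hβk : 0 < βk) (hβb : 0 < βb) (hθb : 0 < θb)
    (hδz : 0 < δz) (hρz : 0 < ρz) (hθz : 0 < θz) :
    StrictMonoOn (Ff κ βk βb θb δz ρz θz hbe hze) (Icc 0 1) := by
  intro k1 hk1 k2 hk2 h12
  unfold Ff
  have hz1 := zf_mem δz ρz θz hze hδz hρz hθz hk1.1
  have hz2 := zf_mem δz ρz θz hze hδz hρz hθz hk2.1
  have hzm := zf_mono δz ρz θz hze hδz hρz hθz hk1.1 h12.le
  have hA1 : 0 ≤ βk * (κ - 1 + k1) * k1 :=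
    mul_nonneg (mul_nonneg hβk.le (by linarith [hk1.1])) hk1.1
  have hstep : (κ - 1 + k1) * k1 < (κ - 1 + k2) * k2 := by
    nlinarith [mul_nonneg (by linarith : (0:ℝ) ≤ κ - 1) (by linarith : (0:ℝ) ≤ k2 - k1),
      mul_pos (by linarith : (0:ℝ) < k2 - k1) (by linarith [hk1.1] : (0:ℝ) < k2 + k1)]
  have hA : βk * (κ - 1 + k1) * k1 < βk * (κ - 1 + k2) * k2 := by
    nlinarith [mul_lt_mul_of_pos_left hstep hβk]
  have hC : 1 + (θb * zf δz ρz θz hze k1) ^ hbe ≤ 1 + (θb * zf δz ρz θz hze k2) ^ hbe := by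
    gcongr
    exact mul_nonneg hθb.le hz1.1
  have hC2 : (0:ℝ) < 1 + (θb * zf δz ρz θz hze k2) ^ hbe := by
    have := hz2.1; positivity
  have key : βk * (κ - 1 + k1) * k1 * (1 + (θb * zf δz ρz θz hze k1) ^ hbe)
      < βk * (κ - 1 + k2) * k2 * (1 + (θb * zf δz ρz θz hze k2) ^ hbe) :=
    lt_of_le_of_lt (mul_le_mul_of_nonneg_left hC hA1) (mul_lt_mul_of_pos_right hA hC2)
  nlinarith

lemma Ff_cont (κ βk βb θb δz ρz θz : ℝ) (hbe hze : ℕ)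
    (hδz : 0 < δz) (hρz : 0 < ρz) (hθz : 0 < θz) :
    ContinuousOn (Ff κ βk βb θb δz ρz θz hbe hze) (Icc 0 1) := by
  have hzc : ContinuousOn (zf δz ρz θz hze) (Icc 0 1) := by
    unfold zf
    apply ContinuousOn.div (by fun_prop) (by fun_prop)
    intro k hk
    exact (denom_pos δz ρz θz hze hδz hρz hθz hk.1).ne'
  unfold Ff
  apply ContinuousOn.sub _ (by fun_prop)
  apply ContinuousOn.mul (by fun_prop)
  exact continuousOn_const.add ((continuousOn_const.mul hzc).pow hbe)

lemma Ff_zero (κ βk βb θb δz ρz θz : ℝ) (hbe hze : ℕ) :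
    Ff κ βk βb θb δz ρz θz hbe hze 0 = -βb := by
  simp [Ff, zf]

lemma Ff_one (κ βk βb θb δz ρz θz : ℝ) (hbe hze : ℕ)
    (hκ : 1 ≤ κ) (hβk : 0 < βk) (hθb : 0 < θb)
    (hδz : 0 < δz) (hρz : 0 < ρz) (hθz : 0 < θz) :
    0 < Ff κ βk βb θb δz ρz θz hbe hze 1 := by
  have hz1 := (zf_mem δz ρz θz hze hδz hρz hθz (by norm_num : (0:ℝ) ≤ 1)).1
  unfold Ff
  have hC : (0:ℝ) < 1 + (θb * zf δz ρz θz hze 1) ^ hbe := by positivity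
  nlinarith [mul_pos (mul_pos hβk (by linarith : (0:ℝ) < κ)) hC]

lemma e3_of_zf (δz ρz θz : ℝ) (hze : ℕ) (hδz : 0 < δz) (hρz : 0 < ρz) (hθz : 0 < θz)
    {k : ℝ} (hk : 0 ≤ k) :
    δz * (1 - zf δz ρz θz hze k) * k - ρz * zf δz ρz θz hze k / (1 + (θz * k) ^ hze) = 0 := by
  have hA : (0:ℝ) < 1 + (θz * k) ^ hze := by positivity
  have hd := denom_pos δz ρz θz hze hδz hρz hθz hk
  unfold zf
  field_simp
  ring

lemma sol_props (κ βk βb θb δz ρz θz : ℝ) (hbe hze : ℕ)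
    (hκ : 1 ≤ κ) (hβk : 0 < βk) (hβb : 0 < βb) (hθb : 0 < θb)
    (hδz : 0 < δz) (hρz : 0 < ρz) (hθz : 0 < θz)
    (b k z : ℝ) (hk : k ∈ Icc (0:ℝ) 1) (hz : z ∈ Icc (0:ℝ) 1)
    (e1 : βk * (κ - 1 + k) * k - βb * (1 - k) * b + 1 / (1 + (θb * z) ^ hbe) - b = 0)
    (e2 : βb * (1 - k) * b - βk * (κ - 1 + k) * k = 0)
    (e3 : δz * (1 - z) * k - ρz * z / (1 + (θz * k) ^ hze) = 0) :
    k ≠ 1 ∧ z = zf δz ρz θz hze k ∧ b = 1 / (1 + (θb * z) ^ hbe) ∧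
      Ff κ βk βb θb δz ρz θz hbe hze k = 0 ∧
      b = βk * (κ - 1 + k) * k / (βb * (1 - k)) := by
  have hz0 := hz.1
  have hk0 := hk.1
  have hCb : (0:ℝ) < 1 + (θb * z) ^ hbe := by positivity
  have hCz : (0:ℝ) < 1 + (θz * k) ^ hze := by positivity
  have hb : b = 1 / (1 + (θb * z) ^ hbe) := by linarith
  have hk1 : k ≠ 1 := by
    intro h
    rw [h] at e2
    nlinarith [mul_pos hβk (by linarith : (0:ℝ) < κ)]
  have hklt : k < 1 := lt_of_le_of_ne hk.2 hk1
  have hzeq : z = zf δz ρz θz hze k := by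
    have e3' : ρz * z = δz * (1 - z) * k * (1 + (θz * k) ^ hze) := by
      have h1 : ρz * z / (1 + (θz * k) ^ hze) = δz * (1 - z) * k := by linarith
      rw [div_eq_iff hCz.ne'] at h1
      linarith [h1]
    have hd := denom_pos δz ρz θz hze hδz hρz hθz hk0
    unfold zf
    rw [eq_div_iff hd.ne']
    linear_combination e3'
  have hbC : b * (1 + (θb * z) ^ hbe) = 1 := by
    rw [hb]; field_simp
  have hFf : Ff κ βk βb θb δz ρz θz hbe hze k = 0 := by
    unfold Ff
    rw [← hzeq]
    linear_combination (-(1 + (θb * z) ^ hbe)) * e2 + βb * (1 - k) * hbC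
  have hbform : b = βk * (κ - 1 + k) * k / (βb * (1 - k)) := by
    rw [eq_div_iff (mul_pos hβb (by linarith : (0:ℝ) < 1 - k)).ne']
    linear_combination e2
  exact ⟨hk1, hzeq, hb, hFf, hbform⟩

/-- The nondimensionalised BR signalling system has exactly one steady state in
`M = [0, 1+βk κ] × [0,1] × [0,1]`, and its components satisfy the given formulas. -/
theorem stmt_7
    (κ βk βb θb ε δz ρz θz : ℝ) (hbe hze : ℕ)
    (hκ : 1 ≤ κ) (hβk : 0 < βk) (hβb : 0 < βb) (hθb : 0 < θb) (hε : 0 < ε)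
    (hδz : 0 < δz) (hρz : 0 < ρz) (hθz : 0 < θz) (hhb : 0 < hbe) (hhz : 0 < hze) :
    (∃! p : ℝ × ℝ × ℝ,
      p ∈ Set.Icc (0 : ℝ) (1 + βk * κ) ×ˢ Set.Icc (0 : ℝ) 1 ×ˢ Set.Icc (0 : ℝ) 1 ∧
      βk * (κ - 1 + p.2.1) * p.2.1 - βb * (1 - p.2.1) * p.1
          + 1 / (1 + (θb * p.2.2) ^ hbe) - p.1 = 0 ∧
      βb * (1 - p.2.1) * p.1 - βk * (κ - 1 + p.2.1) * p.2.1 = 0 ∧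
      δz * (1 - p.2.2) * p.2.1 - ρz * p.2.2 / (1 + (θz * p.2.1) ^ hze) = 0) ∧
    (∀ p : ℝ × ℝ × ℝ,
      p ∈ Set.Icc (0 : ℝ) (1 + βk * κ) ×ˢ Set.Icc (0 : ℝ) 1 ×ˢ Set.Icc (0 : ℝ) 1 →
      βk * (κ - 1 + p.2.1) * p.2.1 - βb * (1 - p.2.1) * p.1
          + 1 / (1 + (θb * p.2.2) ^ hbe) - p.1 = 0 →
      βb * (1 - p.2.1) * p.1 - βk * (κ - 1 + p.2.1) * p.2.1 = 0 →
      δz * (1 - p.2.2) * p.2.1 - ρz * p.2.2 / (1 + (θz * p.2.1) ^ hze) = 0 →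
      p.1 = βk * (κ - 1 + p.2.1) * p.2.1 / (βb * (1 - p.2.1)) ∧
      p.2.2 = δz * p.2.1 * (1 + (θz * p.2.1) ^ hze)
        / (ρz + δz * p.2.1 * (1 + (θz * p.2.1) ^ hze))) := by
  have hFmono := Ff_strictMono κ βk βb θb δz ρz θz hbe hze hκ hβk hβb hθb hδz hρz hθz
  have hFc := Ff_cont κ βk βb θb δz ρz θz hbe hze hδz hρz hθz
  have hF0 : Ff κ βk βb θb δz ρz θz hbe hze 0 = -βb := Ff_zero κ βk βb θb δz ρz θz hbe hze
  have hF1 := Ff_one κ βk βb θb δz ρz θz hbe hze hκ hβk hθb hδz hρz hθz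
  have hsub := intermediate_value_Icc (by norm_num : (0:ℝ) ≤ 1) hFc
  obtain ⟨ks, hksmem, hks⟩ := hsub
    (show (0:ℝ) ∈ Set.Icc (Ff κ βk βb θb δz ρz θz hbe hze 0) (Ff κ βk βb θb δz ρz θz hbe hze 1)
      from ⟨by rw [hF0]; linarith, hF1.le⟩)
  have hks0 : 0 < ks := by
    rcases lt_or_eq_of_le hksmem.1 with h | h
    · exact h
    · exfalso; rw [← h, hF0] at hks; linarith
  have hks1 : ks < 1 := by
    rcases lt_or_eq_of_le hksmem.2 with h | h
    · exact h
    · exfalso; rw [h] at hks; linarith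
  have hzsmem := zf_mem δz ρz θz hze hδz hρz hθz hksmem.1
  have hCbpos : (0:ℝ) < 1 + (θb * zf δz ρz θz hze ks) ^ hbe := by
    have := hzsmem.1; positivity
  have hCb1 : (1:ℝ) ≤ 1 + (θb * zf δz ρz θz hze ks) ^ hbe :=
    le_add_of_nonneg_right (pow_nonneg (mul_nonneg hθb.le hzsmem.1) _)
  have hFeq : βk * (κ - 1 + ks) * ks * (1 + (θb * zf δz ρz θz hze ks) ^ hbe)
      = βb * (1 - ks) := by
    have h := hks; unfold Ff at h; linarith
  have hdenpos : (0:ℝ) < βb * (1 - ks) := mul_pos hβb (by linarith)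
  have hbsC : βk * (κ - 1 + ks) * ks / (βb * (1 - ks))
      = 1 / (1 + (θb * zf δz ρz θz hze ks) ^ hbe) := by
    rw [div_eq_div_iff hdenpos.ne' hCbpos.ne']
    linear_combination hFeq
  have he2 : βb * (1 - ks) * (βk * (κ - 1 + ks) * ks / (βb * (1 - ks)))
      - βk * (κ - 1 + ks) * ks = 0 := by
    field_simp
    rw [div_self (sub_ne_zero.mpr hks1.ne')]; ring
  constructor
  · refine ⟨(βk * (κ - 1 + ks) * ks / (βb * (1 - ks)), ks, zf δz ρz θz hze ks),
      ⟨?_, ?_, ?_, ?_⟩, ?_⟩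
    · simp only [Set.mem_prod]
      refine ⟨⟨?_, ?_⟩, hksmem, hzsmem⟩
      · rw [hbsC]; positivity
      · rw [hbsC]
        have h1 : 1 / (1 + (θb * zf δz ρz θz hze ks) ^ hbe) ≤ 1 := by
          rw [div_le_one hCbpos]; linarith
        nlinarith [mul_pos hβk (by linarith : (0:ℝ) < κ)]
    · dsimp only
      linear_combination (-1 : ℝ) * he2 - hbsC
    · exact he2
    · exact e3_of_zf δz ρz θz hze hδz hρz hθz hksmem.1
    · rintro ⟨b, k, z⟩ ⟨hmem, e1, e2, e3⟩
      dsimp only at e1 e2 e3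
      simp only [Set.mem_prod] at hmem
      obtain ⟨hbmem, hkmem, hzmem⟩ := hmem
      obtain ⟨hk1, hzeq, hb, hFf0, hbform⟩ := sol_props κ βk βb θb δz ρz θz hbe hze
        hκ hβk hβb hθb hδz hρz hθz b k z hkmem hzmem e1 e2 e3
      have hkk : k = ks := hFmono.injOn hkmem hksmem (hFf0.trans hks.symm)
      have hzz : z = zf δz ρz θz hze ks := by rw [hzeq, hkk]
      refine Prod.ext ?_ (Prod.ext ?_ ?_) <;> dsimp only
      · rw [hbform, hkk]
      · exact hkk
      · exact hzz
  · intro p hmem e1 e2 e3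
    simp only [Set.mem_prod] at hmem
    obtain ⟨hbmem, hkmem, hzmem⟩ := hmem
    obtain ⟨hk1, hzeq, hb, hFf0, hbform⟩ := sol_props κ βk βb θb δz ρz θz hbe hze
      hκ hβk hβb hθb hδz hρz hθz p.1 p.2.1 p.2.2 hkmem hzmem e1 e2 e3
    refine ⟨hbform, ?_⟩
    rw [hzeq]; rfl
end

section
/- Let (b*,k*,z*) be a steady state of the nondimensionalised BR system lying in [0,1+β_k κ]×[0,1)×[0,1]. Then the coefficients of the characteristic polynomial λ³ + a₂λ² + a₁λ + a₀ of the Jacobian at (b*,k*,z*) are all strictly positive, where a₂ = β_b(1−k*) + 1 + (β_b/ε)b* + (β_k/ε)(κ−1+2k*) + δ_z k* + ρ_z/(1+(θ_z k*)^{h_z}), a₁ = (1/ε)(β_b b* + β_k(κ−1+2k*))(β_b(1−k*) + 2 + δ_z k* + ρ_z/(1+(θ_z k*)^{h_z})) + (β_b(1−k*)+1)(δ_z k* + ρ_z/(1+(θ_z k*)^{h_z})), and a₀ = (1/ε)β_b(1−k*) · θ_b h_b (θ_b z*)^{h_b−1}/(1+(θ_b z*)^{h_b})² · (δ_z(1−z*)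 + ρ_z z* θ_z h_z (θ_z k*)^{h_z−1}/(1+(θ_z k*)^{h_z})²) + (1/ε)(β_b b* + β_k(κ−1+2k*))(δ_z k* + ρ_z/(1+(θ_z k*)^{h_z})). -/
/-- At a steady state of the nondimensionalised BR system, all coefficients of the
characteristic polynomial of the Jacobian are strictly positive. -/
theorem stmt_8
    (κ βk βb θb ε δz ρz θz : ℝ) (hbe hze : ℕ)
    (hκ : 1 ≤ κ) (hβk : 0 < βk) (hβb : 0 < βb) (hθb : 0 < θb) (hε : 0 < ε)
    (hδz : 0 < δz) (hρz : 0 < ρz) (hθz : 0 < θz) (hhb : 1 ≤ hbe) (hhz : 1 ≤ hze)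
    (bs ks zs : ℝ)
    (hbs : 0 < bs) (hbs' : bs ≤ 1 + βk * κ)
    (hks : 0 < ks) (hks' : ks < 1) (hzs : 0 < zs) (hzs' : zs < 1)
    (heq1 : βk * (κ - 1 + ks) * ks - βb * (1 - ks) * bs
      + 1 / (1 + (θb * zs) ^ hbe) - bs = 0)
    (heq2 : βb * (1 - ks) * bs - βk * (κ - 1 + ks) * ks = 0)
    (heq3 : δz * (1 - zs) * ks - ρz * zs / (1 + (θz * ks) ^ hze) = 0)
    (a₂ a₁ a₀ : ℝ)
    (ha₂ : a₂ = βb * (1 - ks) + 1 + (βb / ε) * bs + (βk / ε) * (κ - 1 + 2 * ks)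
      + δz * ks + ρz / (1 + (θz * ks) ^ hze))
    (ha₁ : a₁ = (1 / ε) * (βb * bs + βk * (κ - 1 + 2 * ks)) *
        (βb * (1 - ks) + 2 + δz * ks + ρz / (1 + (θz * ks) ^ hze))
      + (βb * (1 - ks) + 1) * (δz * ks + ρz / (1 + (θz * ks) ^ hze)))
    (ha₀ : a₀ = (1 / ε) * (βb * (1 - ks)) *
        (θb * (hbe : ℝ) * (θb * zs) ^ (hbe - 1) / (1 + (θb * zs) ^ hbe) ^ 2) *
        (δz * (1 - zs)
          + ρz * zs * θz * (hze : ℝ) * (θz * ks) ^ (hze - 1) / (1 + (θz * ks) ^ hze) ^ 2)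
      + (1 / ε) * (βb * bs + βk * (κ - 1 + 2 * ks)) *
        (δz * ks + ρz / (1 + (θz * ks) ^ hze))) :
    0 < a₂ ∧ 0 < a₁ ∧ 0 < a₀ := by
  subst ha₂ ha₁ ha₀
  have h1 : (0:ℝ) < 1 - ks := by linarith
  have h2 : (0:ℝ) < κ - 1 + 2 * ks := by linarith
  have h3 : (0:ℝ) < 1 + (θz * ks) ^ hze := by positivity
  have h4 : (0:ℝ) < 1 + (θb * zs) ^ hbe := by positivity
  have h5 : (0:ℝ) < (θb * zs) ^ (hbe - 1) := by positivity
  have h6 : (0:ℝ) < (θz * ks) ^ (hze - 1) := by positivity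
  have h7 : (0:ℝ) < 1 - zs := by linarith
  have h8 : (0:ℝ) < (hbe:ℝ) := by exact_mod_cast hhb
  have h9 : (0:ℝ) < (hze:ℝ) := by exact_mod_cast hhz
  refine ⟨by positivity, by positivity, by positivity⟩
end
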